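/- Fix d ≥ 1. Let Q↑d = {(a₁,…,a_d) ∈ ℚ^d : a₁ < a₂ < … < a_d}, and let J^<_d be the structure with domain Q↑d in the relational language with binary relation symbols <_{ij} and =_{ij} for 1 ≤ i,j ≤ d, interpreted by: ā <_{ij} b̄ iff a_i < b_j, and ā =_{ij} b̄ iff a_i = b_j. Then J^<_d is ultrahomogeneous: every isomorphism between finite substructures of J^<_d extends to an automorphism of J^<_d. -/

import Mathlib

open FirstOrder FirstOrder.Language

/-- The set of strictly increasing d-tuples of rationals. -/
abbrev QUp (d : ℕ) : Type := {v : Fin d → ℚ // StrictMono v}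

/-- The relation symbols of `J^<_d`: for each pair `(i, j)` of coordinates, a binary symbol
`<_{ij}` (encoded by `true`) and a binary symbol `=_{ij}` (encoded by `false`). -/
def JRels (d : ℕ) : ℕ → Type
  | 2 => Fin d × Fin d × Bool
  | _ => Empty

/-- The language of `J^<_d`, with the `2d²` binary relation symbols `<_{ij}` and `=_{ij}`. -/
def JLang (d : ℕ) : FirstOrder.Language := ⟨fun _ => Empty, JRels d⟩

/-- Interpretation of the binary relation symbols:
`u <_{ij} v` iff `u i < v j`, and `u =_{ij} v` iff `u i = v j`. -/
def jBinary {d : ℕ} (r : Fin d × Fin d × Bool) (v : Fin 2 → QUp d) : Prop :=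
  if r.2.2 then (v 0).1 r.1 < (v 1).1 r.2.1 else (v 0).1 r.1 = (v 1).1 r.2.1

/-- The interpretation of the relation symbols on `QUp d`. -/
def jRelInterp (d : ℕ) : ∀ n, JRels d n → (Fin n → QUp d) → Prop
  | 0, r, _ => r.elim
  | 1, r, _ => r.elim
  | 2, r, v => jBinary r v
  | (_ + 3), r, _ => r.elim

/-- The structure `J^<_d` on the strictly increasing d-tuples of rationals. -/
instance (d : ℕ) : (JLang d).Structure (QUp d) where
  funMap := fun f _ => f.elim
  RelMap := fun {n} r v => jRelInterp d n r v

/-- Any finite partial order isomorphism of `ℚ` extends to an order automorphism of `ℚ`. -/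
theorem exists_orderIso_extend (p : Order.PartialIso ℚ ℚ) :
    ∃ e : ℚ ≃o ℚ, ∀ q ∈ p.val, e q.1 = q.2 := by
  classical
  cases nonempty_encodable ℚ
  let to_cofinal : ℚ ⊕ ℚ → Order.Cofinal (Order.PartialIso ℚ ℚ) := fun x ↦
    Sum.recOn x (Order.PartialIso.definedAtLeft ℚ) (Order.PartialIso.definedAtRight ℚ)
  let our_ideal : Order.Ideal (Order.PartialIso ℚ ℚ) := Order.idealOfCofinals p to_cofinal
  let F := fun a ↦ Order.PartialIso.funOfIdeal a our_ideal
      (Order.cofinal_meets_idealOfCofinals _ to_cofinal (Sum.inl a))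
  let G := fun b ↦ Order.PartialIso.invOfIdeal b our_ideal
      (Order.cofinal_meets_idealOfCofinals _ to_cofinal (Sum.inr b))
  refine ⟨OrderIso.ofCmpEqCmp (fun a ↦ (F a).val) (fun b ↦ (G b).val) fun a b ↦ ?_, ?_⟩
  · rcases (F a).prop with ⟨f, hf, ha⟩
    rcases (G b).prop with ⟨g, hg, hb⟩
    rcases our_ideal.directed _ hf _ hg with ⟨m, _, fm, gm⟩
    exact m.prop (a, _) (fm ha) (_, b) (gm hb)
  · rintro ⟨a, b⟩ hq
    rcases (F a).prop with ⟨f, hf, ha⟩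
    rcases our_ideal.directed _ hf _ (Order.mem_idealOfCofinals p to_cofinal) with ⟨m, _, fm, pm⟩
    have h := m.prop (a, (F a).val) (fm ha) (a, b) (pm hq)
    simp only [cmp_self_eq_eq] at h
    exact cmp_eq_eq_iff ((F a).val) b |>.mp h.symm

lemma relMap_eq (d : ℕ) (r : JRels d 2) (v : Fin 2 → QUp d) :
    Structure.RelMap (L := JLang d) (M := QUp d) (n := 2) r v = jBinary r v := rfl

lemma relMap_sub (d : ℕ) (S : (JLang d).Substructure (QUp d)) (r : JRels d 2) (v : Fin 2 → S) :
    Structure.RelMap (L := JLang d) (M := S) (n := 2) r v = jBinary r (fun k => ↑(v k)) := rfl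

lemma key {d : ℕ} {S : (JLang d).Substructure (QUp d)} (f : S ↪[JLang d] QUp d)
    (s t : S) (i j : Fin d) (b : Bool) :
    jBinary (i, j, b) ![f s, f t] ↔ jBinary (i, j, b) ![(s : QUp d), (t : QUp d)] := by
  have h := f.map_rel (n := 2) ((i, j, b) : JRels d 2) ![s, t]
  erw [relMap_eq, relMap_sub] at h
  simpa [jBinary, Function.comp] using h

lemma key_lt {d : ℕ} {S : (JLang d).Substructure (QUp d)} (f : S ↪[JLang d] QUp d)
    (s t : S) (i j : Fin d) :
    (f s).1 i < (f t).1 j ↔ (s : QUp d).1 i < (t : QUp d).1 j := by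
  have h := key f s t i j true
  simpa [jBinary] using h

lemma key_eq {d : ℕ} {S : (JLang d).Substructure (QUp d)} (f : S ↪[JLang d] QUp d)
    (s t : S) (i j : Fin d) :
    (f s).1 i = (f t).1 j ↔ (s : QUp d).1 i = (t : QUp d).1 j := by
  have h := key f s t i j false
  simpa [jBinary] using h

/-- Every subset of `QUp d` is a substructure, since the language has no function symbols. -/
def subOfSet {d : ℕ} (s : Set (QUp d)) : (JLang d).Substructure (QUp d) where
  carrier := s
  fun_mem := fun {_} F => Empty.elim F

lemma closure_sub {d : ℕ} (s : Set (QUp d)) :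
    ↑(Substructure.closure (JLang d) s) ⊆ s :=
  SetLike.coe_subset_coe.2 ((Substructure.closure_le (S := subOfSet s)).2 subset_rfl)

/-- `J^<_d` is ultrahomogeneous: every isomorphism between finite (= finitely generated)
substructures of `J^<_d` extends to an automorphism of `J^<_d`. -/
theorem JLang_ultrahomogeneous (d : ℕ) (hd : 1 ≤ d) :
    (JLang d).IsUltrahomogeneous (QUp d) := by
  intro S hS f
  classical
  -- `S` is a finite set, since the language has no function symbols
  obtain ⟨t, ht⟩ := hS
  have hsub : (S : Set (QUp d)) ⊆ ↑t := by
    rw [← ht]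
    exact closure_sub _
  have hfin : (S : Set (QUp d)).Finite := t.finite_toSet.subset hsub
  haveI : Finite S := hfin.to_subtype
  -- the graph of `f` on coordinates
  set G : Set (ℚ × ℚ) :=
    Set.range (fun x : S × Fin d => ((x.1 : QUp d).1 x.2, (f x.1).1 x.2)) with hGdef
  have hG : G.Finite := Set.finite_range _
  have hcmp : ∀ p ∈ hG.toFinset, ∀ q ∈ hG.toFinset, cmp p.1 q.1 = cmp p.2 q.2 := by
    rintro p hp q hq
    rw [Set.Finite.mem_toFinset] at hp hq
    obtain ⟨⟨s, i⟩, rfl⟩ := hp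
    obtain ⟨⟨u, j⟩, rfl⟩ := hq
    dsimp only
    rcases lt_trichotomy ((s : QUp d).1 i) ((u : QUp d).1 j) with h | h | h
    · rw [(cmp_eq_lt_iff _ _).mpr h, (cmp_eq_lt_iff _ _).mpr ((key_lt f s u i j).mpr h)]
    · rw [(cmp_eq_eq_iff _ _).mpr h, (cmp_eq_eq_iff _ _).mpr ((key_eq f s u i j).mpr h)]
    · rw [(cmp_eq_gt_iff _ _).mpr h, (cmp_eq_gt_iff _ _).mpr ((key_lt f u s j i).mpr h)]
  obtain ⟨e, he⟩ := exists_orderIso_extend ⟨hG.toFinset, hcmp⟩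
  have heS : ∀ (s : S) (i : Fin d), e ((s : QUp d).1 i) = (f s).1 i := by
    intro s i
    exact he _ (by rw [Set.Finite.mem_toFinset]; exact ⟨(s, i), rfl⟩)
  refine ⟨⟨⟨fun u => ⟨e ∘ u.1, e.strictMono.comp u.2⟩,
            fun u => ⟨e.symm ∘ u.1, e.symm.strictMono.comp u.2⟩, ?_, ?_⟩, ?_, ?_⟩, ?_⟩
  · intro u
    exact Subtype.ext (funext fun i => by simp)
  · intro u
    exact Subtype.ext (funext fun i => by simp)
  · intro n F x
    exact Empty.elim F
  · intro n r x
    match n, r with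
    | 2, r =>
      erw [relMap_eq, relMap_eq]
      obtain ⟨i, j, b⟩ := r
      cases b <;> simp [jBinary, Function.comp]
    | 0, r => exact Empty.elim r
    | 1, r => exact Empty.elim r
    | (m + 3), r => exact Empty.elim r
  · ext s i
    exact (heS s i).symm
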